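/- arXiv:1412.5274 — 6 statements merged into one kernel-verified Lean document; each statement's English description precedes it below -/
import Mathlib

section
/- Let 0 < q < 1 and p > 1. For any sequence of positive reals (a_n)_{n≥1} with ∑ a_n^p < ∞, one has ∑_{n=1}^∞ ( q^{-n} ∑_{k=n}^∞ q^k a_k )^p ≤ (1-q)^{-p} ∑_{n=1}^∞ a_n^p. -/
open scoped ENNReal
open MeasureTheory

/-- Hölder's inequality for `tsum` over `ℕ` in `ℝ≥0∞`. -/
lemma tsum_holder {p q : ℝ} (hpq : Real.HolderConjugate p q) (f g : ℕ → ℝ≥0∞) :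
    ∑' k, f k * g k ≤ (∑' k, f k ^ p) ^ (1 / p) * (∑' k, g k ^ q) ^ (1 / q) := by
  have := ENNReal.lintegral_mul_le_Lp_mul_Lq (Measure.count : Measure ℕ) hpq
    (measurable_of_countable f).aemeasurable (measurable_of_countable g).aemeasurable
  simpa [lintegral_count] using this

/-- Jensen-type estimate for geometric weights in `ℝ≥0∞`. -/
lemma jensen_geom {p : ℝ} (hp : 1 < p) (Q : ℝ≥0∞) (B : ℕ → ℝ≥0∞) :
    (∑' k, Q ^ k * B k) ^ p ≤ ((1 - Q)⁻¹) ^ (p - 1) * ∑' k, Q ^ k * B k ^ p := by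
  have hpq : Real.HolderConjugate p (Real.conjExponent p) :=
    Real.HolderConjugate.conjExponent hp
  set q' := Real.conjExponent p with hq'
  have hp0 : (0:ℝ) < p := by linarith
  have hq'0 : (0:ℝ) < q' := hpq.symm.pos
  have h1p : (0:ℝ) ≤ 1 / p := by positivity
  have h1q : (0:ℝ) ≤ 1 / q' := by positivity
  have h2 : 1 / p * p = 1 := by field_simp
  have h3 : 1 / q' + 1 / p = 1 := by
    have := hpq.inv_add_inv_eq_one
    rw [inv_eq_one_div, inv_eq_one_div] at this
    linarith
  have h4 : 1 / q' * p = p - 1 := by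
    have hpne : p ≠ 0 := hp0.ne'
    field_simp at h3 ⊢
    nlinarith [h3]
  have key : ∑' k, Q ^ k * B k ≤
      ((1 - Q)⁻¹) ^ (1 / q') * (∑' k, Q ^ k * B k ^ p) ^ (1 / p) := by
    have h := tsum_holder hpq.symm (fun k => (Q ^ k) ^ (1 / q'))
      (fun k => (Q ^ k) ^ (1 / p) * B k)
    have e1 : ∀ k : ℕ, (Q ^ k) ^ (1 / q') * ((Q ^ k) ^ (1 / p) * B k) = Q ^ k * B k := by
      intro k
      rw [← mul_assoc, ← ENNReal.rpow_add_of_nonneg _ _ h1q h1p, h3, ENNReal.rpow_one]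
    have e2 : ∀ k : ℕ, ((Q ^ k) ^ (1 / q')) ^ q' = Q ^ k := by
      intro k
      rw [← ENNReal.rpow_mul]
      rw [show 1 / q' * q' = 1 by field_simp, ENNReal.rpow_one]
    have e3 : ∀ k : ℕ, ((Q ^ k) ^ (1 / p) * B k) ^ p = Q ^ k * B k ^ p := by
      intro k
      rw [ENNReal.mul_rpow_of_nonneg _ _ hp0.le, ← ENNReal.rpow_mul, h2, ENNReal.rpow_one]
    simp only [e1, e2, e3] at h
    rw [ENNReal.tsum_geometric] at h
    exact h
  calc (∑' k, Q ^ k * B k) ^ p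
      ≤ (((1 - Q)⁻¹) ^ (1 / q') * (∑' k, Q ^ k * B k ^ p) ^ (1 / p)) ^ p :=
        ENNReal.rpow_le_rpow key hp0.le
    _ = ((1 - Q)⁻¹) ^ (p - 1) * ∑' k, Q ^ k * B k ^ p := by
        rw [ENNReal.mul_rpow_of_nonneg _ _ hp0.le, ← ENNReal.rpow_mul, ← ENNReal.rpow_mul,
          h4, h2, ENNReal.rpow_one]

/-- Discrete dual Hardy inequality: for `0 < q < 1`, `p > 1` and a positive
sequence `(a_n)_{n ≥ 1}` (represented by `fun n => a (n+1)`) with `∑ aₙ^p < ∞`,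
`∑_{n=1}^∞ (q^{-n} ∑_{k=n}^∞ q^k a_k)^p ≤ (1-q)^{-p} ∑ aₙ^p`. -/
theorem hardy_q_discrete (q p : ℝ) (hq0 : 0 < q) (hq1 : q < 1) (hp : 1 < p)
    (a : ℕ → ℝ) (ha : ∀ n : ℕ, 0 < a (n + 1))
    (hap : Summable fun n : ℕ => a (n + 1) ^ p) :
    ∑' n : ℕ, ((q ^ (n + 1))⁻¹ * ∑' k : ℕ, q ^ (n + 1 + k) * a (n + 1 + k)) ^ p ≤
      ((1 - q)⁻¹) ^ p * ∑' n : ℕ, a (n + 1) ^ p := by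
  have hp0 : (0:ℝ) < p := by linarith
  set Q : ℝ≥0∞ := ENNReal.ofReal q with hQ
  set A : ℕ → ℝ≥0∞ := fun n => ENNReal.ofReal (a (n + 1)) with hA
  have hAne : ∀ n, A n ≠ ∞ := fun n => ENNReal.ofReal_ne_top
  have hQne : Q ≠ ∞ := ENNReal.ofReal_ne_top
  have hQ1 : Q < 1 := by
    rw [hQ, ← ENNReal.ofReal_one]
    exact (ENNReal.ofReal_lt_ofReal_iff one_pos).mpr hq1
  have hCne : (1 - Q)⁻¹ ≠ ∞ := by
    simp [ENNReal.inv_ne_top, tsub_eq_zero_iff_le, not_le, hQ1]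
  have hC0 : (1 - Q)⁻¹ ≠ 0 := by
    simp [ENNReal.inv_ne_zero]
  -- the ENNReal tail sums
  set T : ℕ → ℝ≥0∞ := fun n => ∑' k, Q ^ k * A (n + k) with hT
  -- sum of p-th powers of A
  have hS : ∑' n, A n ^ p = ENNReal.ofReal (∑' n, a (n + 1) ^ p) := by
    rw [ENNReal.ofReal_tsum_of_nonneg (fun n => (Real.rpow_nonneg (ha n).le p)) hap]
    exact tsum_congr fun n => (ENNReal.ofReal_rpow_of_pos (ha n) (p := p))
  have hSne : ∑' n, A n ^ p ≠ ∞ := by rw [hS]; exact ENNReal.ofReal_ne_top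
  -- core ENNReal inequality
  have core : ∑' n, T n ^ p ≤ ((1 - Q)⁻¹) ^ p * ∑' n, A n ^ p := by
    calc ∑' n, T n ^ p
        ≤ ∑' n, ((1 - Q)⁻¹) ^ (p - 1) * ∑' k, Q ^ k * A (n + k) ^ p :=
          ENNReal.tsum_le_tsum fun n => jensen_geom hp Q (fun k => A (n + k))
      _ = ((1 - Q)⁻¹) ^ (p - 1) * ∑' n, ∑' k, Q ^ k * A (n + k) ^ p := ENNReal.tsum_mul_left
      _ ≤ ((1 - Q)⁻¹) ^ (p - 1) * (((1 - Q)⁻¹) * ∑' n, A n ^ p) := by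
          gcongr
          calc ∑' (n : ℕ), ∑' (k : ℕ), Q ^ k * A (n + k) ^ p
              = ∑' (k : ℕ), Q ^ k * ∑' (n : ℕ), A (n + k) ^ p := by
                rw [ENNReal.tsum_comm]
                exact tsum_congr fun k => ENNReal.tsum_mul_left
            _ ≤ ∑' (k : ℕ), Q ^ k * ∑' n, A n ^ p := by
                refine ENNReal.tsum_le_tsum fun k => mul_le_mul_right ?_ _
                exact ENNReal.tsum_comp_le_tsum_of_injective (add_left_injective k) (fun n => A n ^ p)
            _ = ((1 - Q)⁻¹) * ∑' n, A n ^ p := by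
                rw [ENNReal.tsum_mul_right, ENNReal.tsum_geometric]
      _ = ((1 - Q)⁻¹) ^ p * ∑' n, A n ^ p := by
          rw [← mul_assoc]
          congr 1
          calc ((1 - Q)⁻¹) ^ (p - 1) * (1 - Q)⁻¹
              = ((1 - Q)⁻¹) ^ (p - 1) * ((1 - Q)⁻¹) ^ (1:ℝ) := by rw [ENNReal.rpow_one]
            _ = ((1 - Q)⁻¹) ^ p := by
                rw [← ENNReal.rpow_add _ _ hC0 hCne]; norm_num
  have hTlt : ∀ n, T n ≠ ∞ := by
    intro n
    have h1 : T n ^ p ≤ ∑' m, T m ^ p := ENNReal.le_tsum n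
    have h2 : ∑' m, T m ^ p ≠ ∞ := by
      refine ne_top_of_le_ne_top ?_ core
      exact ENNReal.mul_ne_top (ENNReal.rpow_ne_top_of_nonneg hp0.le hCne) hSne
    intro hcon
    have : T n ^ p = ∞ := by rw [hcon]; exact ENNReal.top_rpow_of_pos hp0
    exact h2 (top_le_iff.mp (this ▸ h1))
  -- identify the real terms with toReal of T
  have hterm : ∀ n : ℕ,
      (q ^ (n + 1))⁻¹ * ∑' k : ℕ, q ^ (n + 1 + k) * a (n + 1 + k) = (T n).toReal := by
    intro n
    have e1 : (fun k : ℕ => q ^ (n + 1 + k) * a (n + 1 + k)) =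
        fun k : ℕ => q ^ (n + 1) * (q ^ k * a (n + 1 + k)) := by
      funext k; rw [pow_add]; ring
    rw [e1, tsum_mul_left, ← mul_assoc, inv_mul_cancel₀ (by positivity), one_mul]
    rw [hT, ENNReal.tsum_toReal_eq (fun k => ENNReal.mul_ne_top
      (ENNReal.pow_ne_top hQne) (hAne _))]
    refine tsum_congr fun k => ?_
    rw [ENNReal.toReal_mul, ENNReal.toReal_pow, hQ, ENNReal.toReal_ofReal hq0.le,
      hA, ENNReal.toReal_ofReal (ha _).le]
    congr 2
    omega
  calc ∑' n : ℕ, ((q ^ (n + 1))⁻¹ * ∑' k : ℕ, q ^ (n + 1 + k) * a (n + 1 + k)) ^ p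
      = ∑' n : ℕ, (T n ^ p).toReal := by
        refine tsum_congr fun n => ?_
        rw [hterm n, ENNReal.toReal_rpow]
    _ = (∑' n, T n ^ p).toReal := by
        rw [ENNReal.tsum_toReal_eq]
        intro n
        exact ENNReal.rpow_ne_top_of_nonneg hp0.le (hTlt n)
    _ ≤ (((1 - Q)⁻¹) ^ p * ∑' n, A n ^ p).toReal := by
        refine ENNReal.toReal_mono ?_ core
        exact ENNReal.mul_ne_top (ENNReal.rpow_ne_top_of_nonneg hp0.le hCne) hSne
    _ = ((1 - q)⁻¹) ^ p * ∑' n : ℕ, a (n + 1) ^ p := by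
        rw [ENNReal.toReal_mul, ← ENNReal.toReal_rpow, hS, ENNReal.toReal_ofReal
          (tsum_nonneg fun n => Real.rpow_nonneg (ha n).le p)]
        congr 2
        rw [ENNReal.toReal_inv, hQ, ← ENNReal.ofReal_one, ← ENNReal.ofReal_sub _ hq0.le,
          ENNReal.toReal_ofReal (by linarith)]
end

section
/- Let 0 < q < 1 and p > 1. The constant (1-q)^{-p} in the inequality ∑_{n=1}^∞ ( q^{-n} ∑_{k=n}^∞ q^k a_k )^p ≤ C ∑_{n=1}^∞ a_n^p is best possible: for every C < (1-q)^{-p} there exists a nonnegative sequence (a_n) with 0 < ∑ a_n^p < ∞ such that ∑_{n=1}^∞ ( q^{-n} ∑_{k=n}^∞ q^k a_k )^p > C ∑_{n=1}^∞ a_n^p. -/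
open Filter Topology

/-- Sharpness of the constant `(1-q)^{-p}` in the discrete dual Hardy inequality:
for every `C < (1-q)^{-p}` there is a nonnegative sequence `(a_n)_{n ≥ 1}`
(represented by `fun n => a (n+1)`) with `0 < ∑ aₙ^p < ∞` for which the
inequality with constant `C` fails. -/
theorem hardy_q_discrete_sharp (q p : ℝ) (hq0 : 0 < q) (hq1 : q < 1) (hp : 1 < p)
    (C : ℝ) (hC : C < ((1 - q)⁻¹) ^ p) :
    ∃ a : ℕ → ℝ, (∀ n : ℕ, 0 ≤ a (n + 1)) ∧
      (Summable fun n : ℕ => a (n + 1) ^ p) ∧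
      0 < ∑' n : ℕ, a (n + 1) ^ p ∧
      C * ∑' n : ℕ, a (n + 1) ^ p <
        ∑' n : ℕ, ((q ^ (n + 1))⁻¹ * ∑' k : ℕ, q ^ (n + 1 + k) * a (n + 1 + k)) ^ p := by
  -- choose t ∈ (0,1) with C < ((1 - q*t)⁻¹)^p
  have hq : (0:ℝ) < 1 - q := by linarith
  have hcont : ContinuousAt (fun t : ℝ => ((1 - q * t)⁻¹) ^ p) 1 := by
    have h1 : ContinuousAt (fun t : ℝ => (1 - q * t)⁻¹) 1 := by
      apply ContinuousAt.inv₀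
      · fun_prop
      · simp only [mul_one]; positivity
    exact h1.rpow_const (Or.inl (by simp only [mul_one]; positivity))
  have htends : Tendsto (fun t : ℝ => ((1 - q * t)⁻¹) ^ p) (𝓝[<] (1:ℝ))
      (𝓝 (((1 - q)⁻¹) ^ p)) := by
    have := hcont.tendsto.mono_left (nhdsWithin_le_nhds (s := Set.Iio (1:ℝ)))
    simpa using this
  have hev : ∀ᶠ t in 𝓝[<] (1:ℝ), C < ((1 - q * t)⁻¹) ^ p :=
    htends.eventually (eventually_gt_nhds hC)
  have hmem : Set.Ioo (0:ℝ) 1 ∈ 𝓝[<] (1:ℝ) :=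
    Ioo_mem_nhdsLT_of_mem (by constructor <;> norm_num)
  have hmem' : ∀ᶠ t in 𝓝[<] (1:ℝ), t ∈ Set.Ioo (0:ℝ) 1 := hmem
  obtain ⟨t, ⟨ht0, ht1⟩, htC⟩ := (hmem'.and hev).exists
  have hqt0 : (0:ℝ) < q * t := by positivity
  have hqt1 : q * t < 1 := by nlinarith
  have h1qt : (0:ℝ) < 1 - q * t := by linarith
  have hp0 : (0:ℝ) < p := by linarith
  have htp0 : (0:ℝ) < t ^ p := Real.rpow_pos_of_pos ht0 p
  have htp1 : t ^ p < 1 := Real.rpow_lt_one ht0.le ht1 hp0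
  -- the test sequence
  refine ⟨fun n => t ^ n, fun n => by positivity, ?_, ?_, ?_⟩
  · -- summability
    have hpow : ∀ n : ℕ, ((t ^ (n+1) : ℝ)) ^ p = (t ^ p) ^ (n+1) := by
      intro n
      rw [← Real.rpow_natCast t (n+1), ← Real.rpow_mul ht0.le,
        mul_comm ((n+1 : ℕ) : ℝ) p, Real.rpow_mul ht0.le, Real.rpow_natCast]
    have hS : Summable (fun n : ℕ => (t ^ p) ^ (n+1)) := by
      have := summable_geometric_of_lt_one htp0.le htp1
      simpa [pow_succ'] using this.mul_left (t ^ p)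
    simpa [hpow] using hS
  · -- positivity of the sum
    have hpow : ∀ n : ℕ, ((t ^ (n+1) : ℝ)) ^ p = (t ^ p) ^ (n+1) := by
      intro n
      rw [← Real.rpow_natCast t (n+1), ← Real.rpow_mul ht0.le,
        mul_comm ((n+1 : ℕ) : ℝ) p, Real.rpow_mul ht0.le, Real.rpow_natCast]
    have hS : Summable (fun n : ℕ => (t ^ p) ^ (n+1)) := by
      have := summable_geometric_of_lt_one htp0.le htp1
      simpa [pow_succ'] using this.mul_left (t ^ p)
    have hS' : Summable (fun n : ℕ => ((t ^ (n+1) : ℝ)) ^ p) := by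
      simpa [hpow] using hS
    refine Summable.tsum_pos hS' (fun n => by positivity) 0 ?_
    positivity
  · -- the strict inequality
    have hpow : ∀ n : ℕ, ((t ^ (n+1) : ℝ)) ^ p = (t ^ p) ^ (n+1) := by
      intro n
      rw [← Real.rpow_natCast t (n+1), ← Real.rpow_mul ht0.le,
        mul_comm ((n+1 : ℕ) : ℝ) p, Real.rpow_mul ht0.le, Real.rpow_natCast]
    have hS : Summable (fun n : ℕ => (t ^ p) ^ (n+1)) := by
      have := summable_geometric_of_lt_one htp0.le htp1
      simpa [pow_succ'] using this.mul_left (t ^ p)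
    have hS' : Summable (fun n : ℕ => ((t ^ (n+1) : ℝ)) ^ p) := by
      simpa [hpow] using hS
    have hSpos : 0 < ∑' n : ℕ, ((t ^ (n+1) : ℝ)) ^ p := by
      refine Summable.tsum_pos hS' (fun n => by positivity) 0 ?_
      positivity
    have hinner : ∀ n : ℕ,
        (∑' k : ℕ, q ^ (n+1+k) * t ^ (n+1+k)) = (q*t) ^ (n+1) * (1 - q*t)⁻¹ := by
      intro n
      have hterm : ∀ k : ℕ, q ^ (n+1+k) * t ^ (n+1+k) = (q*t) ^ (n+1) * (q*t) ^ k := by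
        intro k
        rw [← mul_pow, pow_add]
      simp_rw [hterm]
      rw [tsum_mul_left, tsum_geometric_of_lt_one hqt0.le hqt1]
    have hmain : ∀ n : ℕ,
        ((q ^ (n+1))⁻¹ * ∑' k : ℕ, q ^ (n+1+k) * t ^ (n+1+k)) ^ p
          = (t ^ p) ^ (n+1) * ((1 - q*t)⁻¹) ^ p := by
      intro n
      rw [hinner n]
      have hqn : (0:ℝ) < q ^ (n+1) := pow_pos hq0 _
      have h1 : (q ^ (n+1))⁻¹ * ((q*t) ^ (n+1) * (1 - q*t)⁻¹)
          = t ^ (n+1) * (1 - q*t)⁻¹ := by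
        rw [mul_pow]
        field_simp
      rw [h1, Real.mul_rpow (by positivity) (by positivity), hpow n]
    have hRHS : (∑' n : ℕ, ((q ^ (n+1))⁻¹ * ∑' k : ℕ, q ^ (n+1+k) * t ^ (n+1+k)) ^ p)
        = (∑' n : ℕ, ((t ^ (n+1) : ℝ)) ^ p) * ((1 - q*t)⁻¹) ^ p := by
      rw [tsum_congr hmain, tsum_mul_right, ← tsum_congr hpow]
    calc C * ∑' n : ℕ, ((t ^ (n+1) : ℝ)) ^ p
        < ((1 - q*t)⁻¹) ^ p * ∑' n : ℕ, ((t ^ (n+1) : ℝ)) ^ p :=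
          mul_lt_mul_of_pos_right htC hSpos
      _ = _ := by rw [hRHS, mul_comm]
end

section
/- Let p > 1 and let (a_n)_{n≥1} be nonnegative reals with a_1 > 0 and S = ∑_{n=1}^∞ a_n < ∞. Define A x (i) = ∑_{j=i}^∞ a_{j-i+1} x_j. Then the constant S is sharp: for every ε > 0 there exists a nonnegative sequence x with 0 < ∑ x_j^p < ∞ such that ( ∑_i (A x (i))^p )^{1/p} > (S - ε) ( ∑_j x_j^p )^{1/p}. -/
open Finset

/-- Sharpness of the constant `S` for the upper triangular Toeplitz operator
`(A x)_i = ∑_{j ≥ i} a_{j-i+1} x_j` (row `i+1` is `∑' d, a (d+1) * x (i+1+d)`):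
for every `ε > 0` there is a nonnegative sequence `x` with `0 < ∑ x_j^p < ∞` and
`(∑_i (A x)_i^p)^{1/p} > (S - ε) (∑_j x_j^p)^{1/p}`. -/
theorem toeplitz_sharp (p : ℝ) (hp : 1 < p)
    (a : ℕ → ℝ) (ha : ∀ n : ℕ, 0 ≤ a (n + 1)) (ha1 : 0 < a 1)
    (hsum : Summable fun n : ℕ => a (n + 1)) (S : ℝ) (hS : S = ∑' n : ℕ, a (n + 1))
    (ε : ℝ) (hε : 0 < ε) :
    ∃ x : ℕ → ℝ, (∀ j : ℕ, 0 ≤ x (j + 1)) ∧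
      (Summable fun j : ℕ => x (j + 1) ^ p) ∧
      0 < ∑' j : ℕ, x (j + 1) ^ p ∧
      (S - ε) * (∑' j : ℕ, x (j + 1) ^ p) ^ (1 / p) <
        (∑' i : ℕ, (∑' d : ℕ, a (d + 1) * x (i + 1 + d)) ^ p) ^ (1 / p) := by
  have hp0 : (0:ℝ) < p := by linarith
  have hp0' : p ≠ 0 := ne_of_gt hp0
  set T : ℕ → ℝ := fun k => ∑ d ∈ range k, a (d + 1) with hTdef
  have hT0 : ∀ k, 0 ≤ T k := fun k => Finset.sum_nonneg fun d _ => ha d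
  -- key construction: indicator of {1, ..., M}
  have key : ∀ M : ℕ, 1 ≤ M → ∃ x : ℕ → ℝ,
      (∀ j : ℕ, 0 ≤ x (j + 1)) ∧ (Summable fun j : ℕ => x (j + 1) ^ p) ∧
      (∑' j : ℕ, x (j + 1) ^ p) = M ∧
      (∑' i : ℕ, (∑' d : ℕ, a (d + 1) * x (i + 1 + d)) ^ p)
        = ∑ k ∈ range M, T (k + 1) ^ p := by
    intro M hM
    refine ⟨fun j => if 1 ≤ j ∧ j ≤ M then 1 else 0, ?_, ?_, ?_, ?_⟩
    · intro j; dsimp only; split <;> norm_num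
    · apply summable_of_ne_finset_zero (s := range M)
      intro j hj
      rw [mem_range, not_lt] at hj
      have : ¬ (1 ≤ j + 1 ∧ j + 1 ≤ M) := by omega
      simp only [this, if_false]
      exact Real.zero_rpow hp0'
    · have hxp : ∀ j : ℕ, (if 1 ≤ j + 1 ∧ j + 1 ≤ M then (1:ℝ) else 0) ^ p
          = if j < M then (1:ℝ) else 0 := by
        intro j
        rcases lt_or_ge j M with h | h
        · rw [if_pos ⟨by omega, by omega⟩, if_pos h, Real.one_rpow]
        · rw [if_neg (by omega), if_neg (by omega), Real.zero_rpow hp0']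
      calc (∑' j : ℕ, (if 1 ≤ j + 1 ∧ j + 1 ≤ M then (1:ℝ) else 0) ^ p)
          = ∑ j ∈ range M, (if 1 ≤ j + 1 ∧ j + 1 ≤ M then (1:ℝ) else 0) ^ p := by
            apply tsum_eq_sum
            intro j hj
            rw [mem_range, not_lt] at hj
            rw [hxp j, if_neg (by omega)]
        _ = ∑ j ∈ range M, (1:ℝ) := by
            apply Finset.sum_congr rfl
            intro j hj
            rw [mem_range] at hj
            rw [hxp j, if_pos hj]
        _ = M := by simp
    · have hinner : ∀ i : ℕ,
          (∑' d : ℕ, a (d + 1) * (if 1 ≤ i + 1 + d ∧ i + 1 + d ≤ M then (1:ℝ) else 0))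
            = if i < M then T (M - i) else 0 := by
        intro i
        rcases lt_or_ge i M with h | h
        · rw [if_pos h]
          calc (∑' d : ℕ, a (d + 1) * (if 1 ≤ i + 1 + d ∧ i + 1 + d ≤ M then (1:ℝ) else 0))
              = ∑ d ∈ range (M - i), a (d + 1)
                  * (if 1 ≤ i + 1 + d ∧ i + 1 + d ≤ M then (1:ℝ) else 0) := by
                apply tsum_eq_sum
                intro d hd
                rw [mem_range, not_lt] at hd
                rw [if_neg (by omega), mul_zero]
            _ = ∑ d ∈ range (M - i), a (d + 1) := by
                apply Finset.sum_congr rfl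
                intro d hd
                rw [mem_range] at hd
                rw [if_pos ⟨by omega, by omega⟩, mul_one]
            _ = T (M - i) := rfl
        · rw [if_neg (by omega)]
          have : ∀ d : ℕ, a (d + 1)
              * (if 1 ≤ i + 1 + d ∧ i + 1 + d ≤ M then (1:ℝ) else 0) = 0 := by
            intro d
            rw [if_neg (by omega), mul_zero]
          simp only [this]
          exact tsum_zero
      calc (∑' i : ℕ, (∑' d : ℕ, a (d + 1)
              * (if 1 ≤ i + 1 + d ∧ i + 1 + d ≤ M then (1:ℝ) else 0)) ^ p)
          = ∑' i : ℕ, (if i < M then T (M - i) else 0) ^ p := by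
            congr 1; funext i; rw [hinner i]
        _ = ∑ i ∈ range M, (if i < M then T (M - i) else 0) ^ p := by
            apply tsum_eq_sum
            intro i hi
            rw [mem_range, not_lt] at hi
            rw [if_neg (by omega)]
            exact Real.zero_rpow hp0'
        _ = ∑ i ∈ range M, T (M - 1 - i + 1) ^ p := by
            apply Finset.sum_congr rfl
            intro i hi
            rw [mem_range] at hi
            rw [if_pos hi]
            congr 2
            omega
        _ = ∑ k ∈ range M, T (k + 1) ^ p :=
            Finset.sum_range_reflect (fun k => T (k + 1) ^ p) M
  rcases le_or_gt S ε with hSe | hSe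
  · -- trivial case: S - ε ≤ 0
    obtain ⟨x, hx1, hx2, hx3, hx4⟩ := key 1 le_rfl
    refine ⟨x, hx1, hx2, by rw [hx3]; norm_num, ?_⟩
    rw [hx3, hx4]
    have hT1 : T 1 = a 1 := by simp [hTdef]
    rw [Finset.sum_range_one, hT1]
    have h1 : ((1:ℕ):ℝ) ^ (1/p) = 1 := by norm_num
    rw [h1, mul_one]
    have : (a 1 ^ p) ^ (1/p) = a 1 := by
      rw [← Real.rpow_mul ha1.le, mul_one_div_cancel hp0', Real.rpow_one]
    rw [this]
    linarith
  · -- main case: 0 < S - ε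
    have hSε : 0 < S - ε := by linarith
    have hc : 0 < S - ε / 2 := by linarith
    set c : ℝ := S - ε / 2 with hcdef
    -- find N with T k > c for k ≥ N
    have hten : Filter.Tendsto T Filter.atTop (nhds S) := by
      rw [hS]
      exact hsum.hasSum.tendsto_sum_nat
    have hev : ∀ᶠ k in Filter.atTop, c < T k :=
      hten.eventually (eventually_gt_nhds (by simp [hcdef]; linarith))
    obtain ⟨N, hN⟩ := Filter.eventually_atTop.mp hev
    set r : ℝ := ((S - ε) / c) ^ p with hrdef
    have hrat : (S - ε) / c < 1 := (div_lt_one hc).mpr (by simp only [hcdef]; linarith)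
    have hrat0 : 0 ≤ (S - ε) / c := div_nonneg hSε.le hc.le
    have hr1 : r < 1 := Real.rpow_lt_one hrat0 hrat hp0
    have hr0 : 0 ≤ r := Real.rpow_nonneg hrat0 p
    obtain ⟨M, hMgt⟩ := exists_nat_gt (max ((N:ℝ) / (1 - r)) N)
    have hMN : (N:ℝ) < M := lt_of_le_of_lt (le_max_right _ _) hMgt
    have hMN' : N < M := by exact_mod_cast hMN
    have hM1 : 1 ≤ M := by omega
    have hMr : (N:ℝ) < M * (1 - r) := by
      have h1 : (N:ℝ) / (1 - r) < M := lt_of_le_of_lt (le_max_left _ _) hMgt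
      have h2 : 0 < 1 - r := by linarith
      calc (N:ℝ) = (N:ℝ) / (1 - r) * (1 - r) := by field_simp
        _ < M * (1 - r) := by exact mul_lt_mul_of_pos_right h1 h2
    obtain ⟨x, hx1, hx2, hx3, hx4⟩ := key M hM1
    refine ⟨x, hx1, hx2, ?_, ?_⟩
    · rw [hx3]; exact_mod_cast Nat.lt_of_lt_of_le Nat.zero_lt_one hM1
    rw [hx3, hx4]
    -- lower bound on the sum
    have hrc : r * c ^ p = (S - ε) ^ p := by
      rw [hrdef, ← Real.mul_rpow hrat0 hc.le, div_mul_cancel₀ _ (ne_of_gt hc)]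
    have hsum_lb : ((M:ℝ) - N) * c ^ p ≤ ∑ k ∈ range M, T (k + 1) ^ p := by
      have hsub : Finset.Ico N M ⊆ range M := by
        intro k hk
        rw [mem_Ico] at hk
        rw [mem_range]
        exact hk.2
      have h1 : ∑ k ∈ Finset.Ico N M, T (k + 1) ^ p ≤ ∑ k ∈ range M, T (k + 1) ^ p :=
        Finset.sum_le_sum_of_subset_of_nonneg hsub
          (fun k _ _ => Real.rpow_nonneg (hT0 _) p)
      have h2 : ((M:ℝ) - N) * c ^ p ≤ ∑ k ∈ Finset.Ico N M, T (k + 1) ^ p := by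
        have : ∀ k ∈ Finset.Ico N M, c ^ p ≤ T (k + 1) ^ p := by
          intro k hk
          rw [mem_Ico] at hk
          exact Real.rpow_le_rpow hc.le (hN (k + 1) (by omega)).le hp0.le
        calc ((M:ℝ) - N) * c ^ p = ((M - N : ℕ) : ℝ) * c ^ p := by
              rw [Nat.cast_sub hMN'.le]
          _ = ∑ _k ∈ Finset.Ico N M, c ^ p := by
              rw [Finset.sum_const, Nat.card_Ico, nsmul_eq_mul]
          _ ≤ ∑ k ∈ Finset.Ico N M, T (k + 1) ^ p := Finset.sum_le_sum this
      exact h2.trans h1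
    have hstrict : (M:ℝ) * (S - ε) ^ p < ∑ k ∈ range M, T (k + 1) ^ p := by
      have hcp : 0 < c ^ p := Real.rpow_pos_of_pos hc p
      have : (M:ℝ) * (S - ε) ^ p < ((M:ℝ) - N) * c ^ p := by
        rw [← hrc]
        have : (M:ℝ) * r < (M:ℝ) - N := by nlinarith
        calc (M:ℝ) * (r * c ^ p) = (M:ℝ) * r * c ^ p := by ring
          _ < ((M:ℝ) - N) * c ^ p := mul_lt_mul_of_pos_right this hcp
      linarith
    -- conclude via rpow
    have hM0 : (0:ℝ) ≤ M := Nat.cast_nonneg M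
    have hlhs : (S - ε) * ((M:ℝ)) ^ (1/p) = ((M:ℝ) * (S - ε) ^ p) ^ (1/p) := by
      rw [Real.mul_rpow hM0 (Real.rpow_nonneg hSε.le p),
        ← Real.rpow_mul hSε.le, mul_one_div_cancel hp0', Real.rpow_one, mul_comm]
    rw [hlhs]
    exact Real.rpow_lt_rpow (by positivity) hstrict (by positivity)
end

section
/- Let 0 < q < 1, p ≥ 1, and α < 1 - 1/p. For a nonnegative function f on [0,1), define the q-Jackson integral ∫₀^x f(t) d_q t = (1-q) x ∑_{k=0}^∞ q^k f(q^k x). Then ∫₀^1 x^{p(α-1)} ( ∫₀^x t^{-α} f(t) d_q t )^p d_q x ≤ [1 - 1/p - α]_q^{-p} ∫₀^1 f(t)^p d_q t, where [β]_q = (1 - q^β)/(1 - q), provided the right-hand side is finite. -/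
open scoped ENNReal
open MeasureTheory

lemma holder_tsum_aux {p : ℝ} (hp : 1 < p) (u v : ℕ → ℝ≥0∞) :
    ∑' k, u k * v k ≤
      (∑' k, u k ^ (p / (p - 1))) ^ ((p - 1) / p) * (∑' k, v k ^ p) ^ (1 / p) := by
  have hpq : (p / (p - 1)).HolderConjugate p :=
    (Real.HolderConjugate.conjExponent hp).symm
  have h := ENNReal.lintegral_mul_le_Lp_mul_Lq (Measure.count : Measure ℕ) hpq
    (f := u) (g := v) measurable_from_nat.aemeasurable measurable_from_nat.aemeasurable
  simp only [Pi.mul_apply, lintegral_count] at h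
  have h1 : (p / (p - 1))⁻¹ = (p - 1) / p := by rw [inv_div]
  calc ∑' k, u k * v k
      ≤ (∑' k, u k ^ (p/(p-1))) ^ (1/(p/(p-1))) * (∑' k, v k ^ p) ^ (1/p) := h
    _ = _ := by rw [one_div, h1]

/-- Hardy `q`-inequality (Maligranda–Oinarov–Persson): with `0 < q < 1`, `p ≥ 1`,
`α < 1 - 1/p`, and a nonnegative `f` on `[0,1)` represented by its values
`f k = f(q^k)` at the points `q^k`, the `q`-Jackson integral inequality
`∫₀¹ x^{p(α-1)} (∫₀ˣ t^{-α} f dqt)^p dqx ≤ [1-1/p-α]_q^{-p} ∫₀¹ f^p dqt`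
holds, provided the right-hand side is finite. -/
theorem hardy_q_integral (q p α : ℝ) (hq0 : 0 < q) (hq1 : q < 1) (hp : 1 ≤ p)
    (hα : α < 1 - 1 / p) (f : ℕ → ℝ≥0∞)
    (hfin : ENNReal.ofReal (1 - q) * ∑' k : ℕ, ENNReal.ofReal (q ^ k) * f k ^ p < ⊤) :
    ENNReal.ofReal (1 - q) *
        ∑' m : ℕ, ENNReal.ofReal (q ^ m) * ENNReal.ofReal ((q ^ m) ^ (p * (α - 1))) *
          (ENNReal.ofReal ((1 - q) * q ^ m) *
              ∑' k : ℕ, ENNReal.ofReal (q ^ k) * ENNReal.ofReal ((q ^ (k + m)) ^ (-α)) *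
                f (k + m)) ^ p ≤
      ENNReal.ofReal ((((1 : ℝ) - q ^ (1 - 1 / p - α)) / (1 - q))⁻¹ ^ p) *
        (ENNReal.ofReal (1 - q) * ∑' k : ℕ, ENNReal.ofReal (q ^ k) * f k ^ p) := by
  have hp0 : (0:ℝ) < p := lt_of_lt_of_le one_pos hp
  set β : ℝ := 1 - 1 / p - α with hβdef
  have hβ0 : (0:ℝ) < β := by rw [hβdef]; linarith
  set Q : ℝ≥0∞ := ENNReal.ofReal q with hQdef
  set E : ℝ≥0∞ := ENNReal.ofReal (1 - q) with hEdef
  have hQ0 : Q ≠ 0 := by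
    exact (ENNReal.ofReal_pos.mpr hq0).ne'
  have hQtop : Q ≠ ⊤ := ENNReal.ofReal_ne_top
  have hQ1 : Q < 1 := by
    rw [hQdef, ← ENNReal.ofReal_one]
    exact ENNReal.ofReal_lt_ofReal_iff_of_nonneg hq0.le |>.mpr hq1
  have hQadd : ∀ a b : ℝ, Q ^ (a + b) = Q ^ a * Q ^ b :=
    fun a b => ENNReal.rpow_add a b hQ0 hQtop
  have hmul : ∀ (a b : ℝ) (x : ℝ≥0∞), Q ^ a * (Q ^ b * x) = Q ^ (a + b) * x := by
    intro a b x; rw [← mul_assoc, ← hQadd]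
  have hofp : ∀ k : ℕ, ENNReal.ofReal (q ^ k) = Q ^ (k:ℝ) := fun k => by
    rw [hQdef, ENNReal.ofReal_pow hq0.le, ENNReal.rpow_natCast]
  have hofr : ∀ (m : ℕ) (r : ℝ), ENNReal.ofReal ((q ^ m) ^ r) = Q ^ ((m:ℝ) * r) := fun m r => by
    rw [hQdef, ← Real.rpow_natCast q m, ← Real.rpow_mul hq0.le, ENNReal.ofReal_rpow_of_pos hq0]
  -- G : the geometric constant
  have hQβ1 : Q ^ β < 1 := ENNReal.rpow_lt_one hQ1 hβ0
  set G : ℝ≥0∞ := (1 - Q ^ β)⁻¹ with hGdef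
  have hsub0 : (1 : ℝ≥0∞) - Q ^ β ≠ 0 := by
    rw [Ne, tsub_eq_zero_iff_le]; exact not_le.mpr hQβ1
  have hsubtop : (1 : ℝ≥0∞) - Q ^ β ≠ ⊤ :=
    ne_top_of_le_ne_top ENNReal.one_ne_top tsub_le_self
  have hGtop : G ≠ ⊤ := by rw [hGdef]; exact ENNReal.inv_ne_top.mpr hsub0
  have hG0 : G ≠ 0 := by rw [hGdef]; exact ENNReal.inv_ne_zero.mpr hsubtop
  have hgeo : ∑' k : ℕ, Q ^ ((k:ℝ) * β) = G := by
    have e : ∀ k : ℕ, Q ^ ((k:ℝ) * β) = (Q ^ β) ^ k := fun k => by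
      rw [mul_comm, ENNReal.rpow_mul, ENNReal.rpow_natCast]
    rw [tsum_congr e, ENNReal.tsum_geometric, hGdef]
  have hkey : 1 - α = β + 1 / p := by rw [hβdef]; ring
  -- Step A : Hölder
  have stepA : ∀ m : ℕ,
      (∑' k : ℕ, Q ^ ((k:ℝ) * (1 - α)) * f (k + m)) ^ p ≤
        G ^ (p - 1) * ∑' k : ℕ, Q ^ ((k:ℝ) * (1 + β)) * f (k + m) ^ p := by
    intro m
    rcases eq_or_lt_of_le hp with hp1 | hp1
    · have hβα : β = -α := by rw [hβdef, ← hp1]; norm_num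
      have hST : (∑' k : ℕ, Q ^ ((k:ℝ) * (1 - α)) * f (k + m)) =
          ∑' k : ℕ, Q ^ ((k:ℝ) * (1 + β)) * f (k + m) ^ p := by
        apply tsum_congr; intro k
        rw [← hp1, ENNReal.rpow_one]
        congr 2
        rw [hβα]; ring
      rw [hST, ← hp1, ENNReal.rpow_one, sub_self, ENNReal.rpow_zero, one_mul]
    · have hpne : p ≠ 0 := ne_of_gt hp0
      have hpm1 : p - 1 ≠ 0 := sub_ne_zero_of_ne (ne_of_gt hp1)
      have h := holder_tsum_aux hp1 (fun k => Q ^ ((k:ℝ) * β * ((p - 1) / p)))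
        (fun k => Q ^ ((k:ℝ) * (1 + β) * (1 / p)) * f (k + m))
      have e1 : ∀ k : ℕ, Q ^ ((k:ℝ) * β * ((p - 1) / p)) *
          (Q ^ ((k:ℝ) * (1 + β) * (1 / p)) * f (k + m)) =
          Q ^ ((k:ℝ) * (1 - α)) * f (k + m) := by
        intro k
        rw [hmul]
        congr 2
        rw [hkey]; field_simp; ring
      have e2 : ∀ k : ℕ, (Q ^ ((k:ℝ) * β * ((p - 1) / p))) ^ (p / (p - 1)) =
          Q ^ ((k:ℝ) * β) := by
        intro k
        rw [← ENNReal.rpow_mul]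
        congr 1
        field_simp
      have e3 : ∀ k : ℕ, (Q ^ ((k:ℝ) * (1 + β) * (1 / p)) * f (k + m)) ^ p =
          Q ^ ((k:ℝ) * (1 + β)) * f (k + m) ^ p := by
        intro k
        rw [ENNReal.mul_rpow_of_nonneg _ _ hp0.le, ← ENNReal.rpow_mul]
        congr 2
        field_simp
      simp_rw [e1, e2, e3] at h
      rw [hgeo] at h
      calc (∑' k : ℕ, Q ^ ((k:ℝ) * (1 - α)) * f (k + m)) ^ p
          ≤ (G ^ ((p - 1) / p) * (∑' k : ℕ, Q ^ ((k:ℝ) * (1 + β)) * f (k + m) ^ p) ^ (1 / p)) ^ p :=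
            ENNReal.rpow_le_rpow h hp0.le
        _ = G ^ (p - 1) * ∑' k : ℕ, Q ^ ((k:ℝ) * (1 + β)) * f (k + m) ^ p := by
            rw [ENNReal.mul_rpow_of_nonneg _ _ hp0.le, ← ENNReal.rpow_mul, ← ENNReal.rpow_mul,
              div_mul_cancel₀ _ hpne, one_div, inv_mul_cancel₀ hpne, ENNReal.rpow_one]
  -- Step B : swap and shift
  have stepB : ∑' m : ℕ, Q ^ (m:ℝ) * ∑' k : ℕ, Q ^ ((k:ℝ) * (1 + β)) * f (k + m) ^ p
      ≤ G * ∑' n : ℕ, Q ^ (n:ℝ) * f n ^ p := by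
    have e4 : ∀ m k : ℕ, Q ^ (m:ℝ) * (Q ^ ((k:ℝ) * (1 + β)) * f (k + m) ^ p) =
        Q ^ ((k:ℝ) * β) * (Q ^ (((k + m : ℕ)):ℝ) * f (k + m) ^ p) := by
      intro m k
      rw [hmul, hmul]
      congr 2
      push_cast
      ring
    calc ∑' m : ℕ, Q ^ (m:ℝ) * ∑' k : ℕ, Q ^ ((k:ℝ) * (1 + β)) * f (k + m) ^ p
        = ∑' m : ℕ, ∑' k : ℕ, Q ^ ((k:ℝ) * β) * (Q ^ (((k + m : ℕ)):ℝ) * f (k + m) ^ p) := by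
          apply tsum_congr; intro m
          rw [← ENNReal.tsum_mul_left]
          exact tsum_congr fun k => e4 m k
      _ = ∑' k : ℕ, Q ^ ((k:ℝ) * β) * ∑' m : ℕ, Q ^ (((k + m : ℕ)):ℝ) * f (k + m) ^ p := by
          rw [ENNReal.tsum_comm]
          exact tsum_congr fun k => ENNReal.tsum_mul_left
      _ ≤ ∑' k : ℕ, Q ^ ((k:ℝ) * β) * ∑' n : ℕ, Q ^ (n:ℝ) * f n ^ p := by
          apply ENNReal.tsum_le_tsum; intro k
          apply mul_le_mul_right
          exact ENNReal.tsum_comp_le_tsum_of_injective (add_right_injective k)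
            (fun n => Q ^ (n:ℝ) * f n ^ p)
      _ = G * ∑' n : ℕ, Q ^ (n:ℝ) * f n ^ p := by
          rw [ENNReal.tsum_mul_right, hgeo]
  -- main inequality
  have main : ∑' m : ℕ, Q ^ (m:ℝ) * (∑' k : ℕ, Q ^ ((k:ℝ) * (1 - α)) * f (k + m)) ^ p
      ≤ G ^ p * ∑' n : ℕ, Q ^ (n:ℝ) * f n ^ p := by
    calc ∑' m : ℕ, Q ^ (m:ℝ) * (∑' k : ℕ, Q ^ ((k:ℝ) * (1 - α)) * f (k + m)) ^ p
        ≤ ∑' m : ℕ, Q ^ (m:ℝ) *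
            (G ^ (p - 1) * ∑' k : ℕ, Q ^ ((k:ℝ) * (1 + β)) * f (k + m) ^ p) :=
          ENNReal.tsum_le_tsum fun m => mul_le_mul_right (stepA m) _
      _ = G ^ (p - 1) * ∑' m : ℕ, Q ^ (m:ℝ) * ∑' k : ℕ, Q ^ ((k:ℝ) * (1 + β)) * f (k + m) ^ p := by
          rw [← ENNReal.tsum_mul_left]
          exact tsum_congr fun m => by ring
      _ ≤ G ^ (p - 1) * (G * ∑' n : ℕ, Q ^ (n:ℝ) * f n ^ p) := mul_le_mul_right stepB _
      _ = G ^ p * ∑' n : ℕ, Q ^ (n:ℝ) * f n ^ p := by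
          rw [← mul_assoc]
          congr 1
          calc G ^ (p - 1) * G = G ^ (p - 1) * G ^ (1:ℝ) := by rw [ENNReal.rpow_one]
            _ = G ^ (p - 1 + 1) := (ENNReal.rpow_add _ _ hG0 hGtop).symm
            _ = G ^ p := by norm_num
  -- inner integral identity
  have hin : ∀ m : ℕ,
      (∑' k : ℕ, ENNReal.ofReal (q ^ k) * ENNReal.ofReal ((q ^ (k + m)) ^ (-α)) * f (k + m)) =
      Q ^ (-(m:ℝ) * α) * ∑' k : ℕ, Q ^ ((k:ℝ) * (1 - α)) * f (k + m) := by
    intro m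
    rw [← ENNReal.tsum_mul_left]
    apply tsum_congr; intro k
    calc ENNReal.ofReal (q ^ k) * ENNReal.ofReal ((q ^ (k + m)) ^ (-α)) * f (k + m)
        = Q ^ ((k:ℝ) + ((k + m : ℕ):ℝ) * (-α)) * f (k + m) := by
          rw [hofp k, hofr (k + m) (-α), hQadd]
      _ = Q ^ (-(m:ℝ) * α) * (Q ^ ((k:ℝ) * (1 - α)) * f (k + m)) := by
          rw [hmul]
          congr 2
          push_cast
          ring
  -- term identity
  have hterm : ∀ m : ℕ,
      ENNReal.ofReal (q ^ m) * ENNReal.ofReal ((q ^ m) ^ (p * (α - 1))) *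
        (ENNReal.ofReal ((1 - q) * q ^ m) *
          ∑' k : ℕ, ENNReal.ofReal (q ^ k) * ENNReal.ofReal ((q ^ (k + m)) ^ (-α)) * f (k + m)) ^ p
      = E ^ p * (Q ^ (m:ℝ) * (∑' k : ℕ, Q ^ ((k:ℝ) * (1 - α)) * f (k + m)) ^ p) := by
    intro m
    rw [hofp m, hofr m (p * (α - 1)), ENNReal.ofReal_mul (by linarith : (0:ℝ) ≤ 1 - q),
      hofp m, hin m, ← hEdef]
    rw [ENNReal.mul_rpow_of_nonneg _ _ hp0.le, ENNReal.mul_rpow_of_nonneg _ _ hp0.le,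
      ENNReal.mul_rpow_of_nonneg _ _ hp0.le, ← ENNReal.rpow_mul, ← ENNReal.rpow_mul]
    calc Q ^ (m:ℝ) * Q ^ ((m:ℝ) * (p * (α - 1))) *
          (E ^ p * Q ^ ((m:ℝ) * p) * (Q ^ (-(m:ℝ) * α * p) *
            (∑' k : ℕ, Q ^ ((k:ℝ) * (1 - α)) * f (k + m)) ^ p))
        = E ^ p * (Q ^ (m:ℝ) * Q ^ ((m:ℝ) * (p * (α - 1))) * Q ^ ((m:ℝ) * p) *
            Q ^ (-(m:ℝ) * α * p) * (∑' k : ℕ, Q ^ ((k:ℝ) * (1 - α)) * f (k + m)) ^ p) := by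
          ring
      _ = E ^ p * (Q ^ ((m:ℝ) + (m:ℝ) * (p * (α - 1)) + (m:ℝ) * p + -(m:ℝ) * α * p) *
            (∑' k : ℕ, Q ^ ((k:ℝ) * (1 - α)) * f (k + m)) ^ p) := by
          rw [hQadd ((m:ℝ) + (m:ℝ) * (p * (α - 1)) + (m:ℝ) * p) (-(m:ℝ) * α * p),
            hQadd ((m:ℝ) + (m:ℝ) * (p * (α - 1))) ((m:ℝ) * p),
            hQadd (m:ℝ) ((m:ℝ) * (p * (α - 1)))]
      _ = E ^ p * (Q ^ (m:ℝ) * (∑' k : ℕ, Q ^ ((k:ℝ) * (1 - α)) * f (k + m)) ^ p) := by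
          rw [show (m:ℝ) + (m:ℝ) * (p * (α - 1)) + (m:ℝ) * p + -(m:ℝ) * α * p = (m:ℝ) by ring]
  -- the constant
  have hconst : ENNReal.ofReal (((1 - q ^ β) / (1 - q))⁻¹ ^ p) = E ^ p * G ^ p := by
    have hqβ1 : q ^ β < 1 := Real.rpow_lt_one hq0.le hq1 hβ0
    have hqβ0 : (0:ℝ) < q ^ β := Real.rpow_pos_of_pos hq0 β
    have h1q : (0:ℝ) < 1 - q := by linarith
    have h1qβ : (0:ℝ) < 1 - q ^ β := by linarith
    rw [inv_div, ← ENNReal.ofReal_rpow_of_pos (div_pos h1q h1qβ),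
      ENNReal.ofReal_div_of_pos h1qβ, ← hEdef]
    have hD : ENNReal.ofReal (1 - q ^ β) = 1 - Q ^ β := by
      rw [ENNReal.ofReal_sub _ hqβ0.le, ENNReal.ofReal_one, ENNReal.ofReal_rpow_of_pos hq0]
    rw [hD, div_eq_mul_inv, ← hGdef, ENNReal.mul_rpow_of_nonneg _ _ hp0.le]
  -- assemble
  calc E * ∑' m : ℕ, ENNReal.ofReal (q ^ m) * ENNReal.ofReal ((q ^ m) ^ (p * (α - 1))) *
        (ENNReal.ofReal ((1 - q) * q ^ m) *
          ∑' k : ℕ, ENNReal.ofReal (q ^ k) * ENNReal.ofReal ((q ^ (k + m)) ^ (-α)) *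
            f (k + m)) ^ p
      = E * ∑' m : ℕ, E ^ p * (Q ^ (m:ℝ) * (∑' k : ℕ, Q ^ ((k:ℝ) * (1 - α)) * f (k + m)) ^ p) := by
        rw [tsum_congr hterm]
    _ = E * (E ^ p * ∑' m : ℕ, Q ^ (m:ℝ) * (∑' k : ℕ, Q ^ ((k:ℝ) * (1 - α)) * f (k + m)) ^ p) := by
        rw [ENNReal.tsum_mul_left]
    _ ≤ E * (E ^ p * (G ^ p * ∑' n : ℕ, Q ^ (n:ℝ) * f n ^ p)) :=
        mul_le_mul_right (mul_le_mul_right main _) _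
    _ = E ^ p * G ^ p * (E * ∑' n : ℕ, Q ^ (n:ℝ) * f n ^ p) := by ring
    _ = ENNReal.ofReal (((1 - q ^ β) / (1 - q))⁻¹ ^ p) *
          (E * ∑' k : ℕ, ENNReal.ofReal (q ^ k) * f k ^ p) := by
        rw [hconst]
        congr 1
        congr 1
        exact tsum_congr fun n => by rw [hofp n]
end

section
/- Let 0 < q < 1, p ≥ 1, and α < 1 - 1/p. The constant [1 - 1/p - α]_q^{-p} in the q-Hardy inequality ∫₀^1 x^{p(α-1)} ( ∫₀^x t^{-α} f(t) d_q t )^p d_q x ≤ C ∫₀^1 f(t)^p d_q t is best possible: no constant C < [1 - 1/p - α]_q^{-p} works for all nonnegative f with finite ∫₀^1 f^p d_q t. -/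
open scoped ENNReal

private lemma pow_rpow_comm' {q : ℝ} (hq : 0 < q) (k : ℕ) (x : ℝ) :
    (q ^ k) ^ x = (q ^ x) ^ k := by
  rw [← Real.rpow_natCast q k, ← Real.rpow_mul hq.le, mul_comm,
    Real.rpow_mul hq.le, Real.rpow_natCast]

private lemma tsum_ofReal_geom {r : ℝ} (h0 : 0 ≤ r) (h1 : r < 1) :
    ∑' k : ℕ, ENNReal.ofReal (r ^ k) = ENNReal.ofReal ((1 - r)⁻¹) := by
  rw [← ENNReal.ofReal_tsum_of_nonneg (fun n => pow_nonneg h0 n)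
    (summable_geometric_of_lt_one h0 h1), tsum_geometric_of_lt_one h0 h1]

/-- Sharpness of the constant `[1-1/p-α]_q^{-p}` in the Hardy `q`-inequality:
no constant `C < [1-1/p-α]_q^{-p}` works for all nonnegative `f` with finite
`∫₀¹ f^p dqt` (with `f` represented by its values `f k = f(q^k)`). -/
theorem hardy_q_integral_sharp (q p α : ℝ) (hq0 : 0 < q) (hq1 : q < 1) (hp : 1 ≤ p)
    (hα : α < 1 - 1 / p) (C : ℝ) (hC0 : 0 ≤ C)
    (hC : C < (((1 : ℝ) - q ^ (1 - 1 / p - α)) / (1 - q))⁻¹ ^ p) :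
    ∃ f : ℕ → ℝ≥0∞,
      ENNReal.ofReal (1 - q) * ∑' k : ℕ, ENNReal.ofReal (q ^ k) * f k ^ p < ⊤ ∧
      ENNReal.ofReal C *
          (ENNReal.ofReal (1 - q) * ∑' k : ℕ, ENNReal.ofReal (q ^ k) * f k ^ p) <
        ENNReal.ofReal (1 - q) *
          ∑' m : ℕ, ENNReal.ofReal (q ^ m) * ENNReal.ofReal ((q ^ m) ^ (p * (α - 1))) *
            (ENNReal.ofReal ((1 - q) * q ^ m) *
                ∑' k : ℕ, ENNReal.ofReal (q ^ k) * ENNReal.ofReal ((q ^ (k + m)) ^ (-α)) *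
                  f (k + m)) ^ p := by
  have hp0 : 0 < p := lt_of_lt_of_le one_pos hp
  have h1q : 0 < 1 - q := by linarith
  -- continuity argument to pick c slightly above -(1/p)
  set c₀ : ℝ := -(1/p) with hc₀
  have hF : ContinuousAt (fun c : ℝ => (((1:ℝ) - q ^ (1 + c - α)) / (1 - q))⁻¹ ^ p) c₀ := by
    have hqc : Continuous fun c : ℝ => q ^ (1 + c - α) := by
      have : (fun c : ℝ => q ^ (1 + c - α)) =
          fun c : ℝ => Real.exp (Real.log q * (1 + c - α)) := by
        funext c; rw [Real.rpow_def_of_pos hq0]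
      rw [this]
      exact Real.continuous_exp.comp (continuous_const.mul (by continuity))
    have hδ : (0:ℝ) < 1 + c₀ - α := by
      rw [hc₀]; linarith [hα]
    have hne : ((1:ℝ) - q ^ (1 + c₀ - α)) / (1 - q) ≠ 0 := by
      have h' : q ^ (1 + c₀ - α) < 1 := Real.rpow_lt_one hq0.le hq1 hδ
      exact ne_of_gt (div_pos (by linarith) h1q)
    have hbase : ContinuousAt (fun c : ℝ => (((1:ℝ) - q ^ (1 + c - α)) / (1 - q))⁻¹) c₀ :=
      ContinuousAt.inv₀ ((continuous_const.sub hqc).div_const (1 - q)).continuousAt hne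
    exact (Real.continuousAt_rpow_const _ p (Or.inr hp0.le)).comp hbase
  have hC' : C < (((1:ℝ) - q ^ (1 + c₀ - α)) / (1 - q))⁻¹ ^ p := by
    have : 1 + c₀ - α = 1 - 1/p - α := by rw [hc₀]; ring
    rw [this]; exact hC
  have hev : ∀ᶠ x in nhdsWithin c₀ (Set.Ioi c₀),
      C < (((1:ℝ) - q ^ (1 + x - α)) / (1 - q))⁻¹ ^ p :=
    ((hF.eventually_mem (lt_mem_nhds hC')).filter_mono nhdsWithin_le_nhds)
  obtain ⟨c, hcC, hcmem⟩ := (hev.and self_mem_nhdsWithin).exists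
  have hcgt : c₀ < c := hcmem
  -- basic positivity facts
  have h2 : (0:ℝ) < 1 + c - α := by
    have : (0:ℝ) < 1 + c₀ - α := by rw [hc₀]; linarith [hα]
    linarith
  have h1 : (0:ℝ) < 1 + c * p := by
    have : c₀ * p < c * p := by exact mul_lt_mul_of_pos_right hcgt hp0
    have h' : c₀ * p = -1 := by rw [hc₀]; field_simp
    linarith
  set s : ℝ := q ^ (1 + c - α) with hs_def
  set r : ℝ := q ^ (1 + c * p) with hr_def
  set u : ℝ := q ^ (c - α) with hu_def
  set a : ℝ := q ^ c with ha_def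
  have hs0 : 0 < s := Real.rpow_pos_of_pos hq0 _
  have hs1 : s < 1 := Real.rpow_lt_one hq0.le hq1 h2
  have hr0 : 0 < r := Real.rpow_pos_of_pos hq0 _
  have hr1 : r < 1 := Real.rpow_lt_one hq0.le hq1 h1
  have hu0 : 0 < u := Real.rpow_pos_of_pos hq0 _
  have ha0 : 0 < a := Real.rpow_pos_of_pos hq0 _
  have h1s : (0:ℝ) < 1 - s := by linarith
  have h1r : (0:ℝ) < 1 - r := by linarith
  have hqu : q * u = s := by
    rw [hu_def, hs_def, show (1:ℝ) + c - α = 1 + (c - α) by ring,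
      Real.rpow_add hq0, Real.rpow_one]
  set K : ℝ := ((1 - q) * (1 - s)⁻¹) ^ p with hK_def
  have hK0 : 0 < K := Real.rpow_pos_of_pos (by positivity) _
  have hqr : q * q ^ (c * p) = r := by
    rw [hr_def, Real.rpow_add hq0, Real.rpow_one]
  have hterm1 : ∀ k : ℕ, ENNReal.ofReal (q ^ k) * ENNReal.ofReal (a ^ k) ^ p
      = ENNReal.ofReal (r ^ k) := by
    intro k
    rw [ENNReal.ofReal_rpow_of_nonneg (by positivity) hp0.le,
      ← ENNReal.ofReal_mul (by positivity)]
    congr 1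
    rw [pow_rpow_comm' ha0 k p, ha_def, ← Real.rpow_mul hq0.le, ← mul_pow, hqr]
  have hsum1 : (∑' k : ℕ, ENNReal.ofReal (q ^ k) * ENNReal.ofReal (a ^ k) ^ p)
      = ENNReal.ofReal ((1 - r)⁻¹) := by
    rw [tsum_congr hterm1, tsum_ofReal_geom hr0.le hr1]
  have hterm2 : ∀ m k : ℕ, ENNReal.ofReal (q ^ k) * ENNReal.ofReal ((q ^ (k + m)) ^ (-α)) *
      ENNReal.ofReal (a ^ (k + m)) = ENNReal.ofReal (u ^ m * (1 - s)⁻¹ * (1 - s) * s ^ k) := by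
    intro m k
    rw [← ENNReal.ofReal_mul (by positivity), ← ENNReal.ofReal_mul (by positivity)]
    congr 1
    rw [pow_rpow_comm' hq0 (k + m) (-α), ha_def, mul_assoc, ← mul_pow,
      ← Real.rpow_add hq0, show -α + c = c - α by ring, ← hu_def, pow_add]
    field_simp
    rw [← hqu, mul_pow]
  have hinner : ∀ m : ℕ, (∑' k : ℕ, ENNReal.ofReal (q ^ k) *
      ENNReal.ofReal ((q ^ (k + m)) ^ (-α)) * ENNReal.ofReal (a ^ (k + m)))
      = ENNReal.ofReal (u ^ m * (1 - s)⁻¹) := by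
    intro m
    rw [tsum_congr (hterm2 m)]
    have : ∀ k : ℕ, ENNReal.ofReal (u ^ m * (1 - s)⁻¹ * (1 - s) * s ^ k)
        = ENNReal.ofReal (u ^ m * (1 - s)⁻¹ * (1 - s)) * ENNReal.ofReal (s ^ k) := by
      intro k; rw [← ENNReal.ofReal_mul (by positivity)]
    rw [tsum_congr this, ENNReal.tsum_mul_left, tsum_ofReal_geom hs0.le hs1,
      ← ENNReal.ofReal_mul (by positivity)]
    congr 1
    field_simp
  have hbr : ∀ m : ℕ, ENNReal.ofReal ((1 - q) * q ^ m) * ENNReal.ofReal (u ^ m * (1 - s)⁻¹)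
      = ENNReal.ofReal ((1 - q) * (1 - s)⁻¹ * s ^ m) := by
    intro m
    rw [← ENNReal.ofReal_mul (by positivity)]
    congr 1
    rw [← hqu, mul_pow]
    ring
  have hbp : ∀ m : ℕ, ENNReal.ofReal ((1 - q) * (1 - s)⁻¹ * s ^ m) ^ p
      = ENNReal.ofReal (K * (s ^ p) ^ m) := by
    intro m
    rw [ENNReal.ofReal_rpow_of_nonneg (by positivity) hp0.le]
    congr 1
    rw [Real.mul_rpow (by positivity) (by positivity), pow_rpow_comm' hs0 m p, hK_def]
  have hkey : q * q ^ (p * (α - 1)) * q ^ ((1 + c - α) * p) = r := by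
    have e1 : q * q ^ (p * (α - 1)) * q ^ ((1 + c - α) * p)
        = q ^ ((1:ℝ) + (p * (α - 1) + (1 + c - α) * p)) := by
      rw [Real.rpow_add hq0, Real.rpow_add hq0, Real.rpow_one, mul_assoc]
    rw [e1, hr_def]
    congr 1
    ring
  have houter : ∀ m : ℕ, ENNReal.ofReal (q ^ m) * ENNReal.ofReal ((q ^ m) ^ (p * (α - 1))) *
      ENNReal.ofReal (K * (s ^ p) ^ m) = ENNReal.ofReal K * ENNReal.ofReal (r ^ m) := by
    intro m
    rw [← ENNReal.ofReal_mul (by positivity), ← ENNReal.ofReal_mul (by positivity),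
      ← ENNReal.ofReal_mul (by positivity)]
    congr 1
    rw [pow_rpow_comm' hq0 m (p * (α - 1)), hs_def, ← Real.rpow_mul hq0.le,
      ← hkey, mul_pow, mul_pow]
    ring
  have hfull : ∀ m : ℕ, ENNReal.ofReal (q ^ m) * ENNReal.ofReal ((q ^ m) ^ (p * (α - 1))) *
      (ENNReal.ofReal ((1 - q) * q ^ m) *
        ∑' k : ℕ, ENNReal.ofReal (q ^ k) * ENNReal.ofReal ((q ^ (k + m)) ^ (-α)) *
          ENNReal.ofReal (a ^ (k + m))) ^ p
      = ENNReal.ofReal K * ENNReal.ofReal (r ^ m) := by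
    intro m
    rw [hinner m, hbr m, hbp m, houter m]
  have hKC : C < K := by
    rw [hK_def, ← div_eq_mul_inv, ← inv_div]
    exact hcC
  refine ⟨fun k => ENNReal.ofReal (a ^ k), ?_, ?_⟩
  · simp only [hsum1]
    exact ENNReal.mul_lt_top ENNReal.ofReal_lt_top ENNReal.ofReal_lt_top
  · simp only [hsum1, hfull]
    rw [ENNReal.tsum_mul_left, tsum_ofReal_geom hr0.le hr1,
      ← ENNReal.ofReal_mul h1q.le, ← ENNReal.ofReal_mul hC0,
      ← ENNReal.ofReal_mul hK0.le, ← ENNReal.ofReal_mul h1q.le]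
    apply (ENNReal.ofReal_lt_ofReal_iff (by positivity)).mpr
    have h := mul_lt_mul_of_pos_right hKC
      (show (0:ℝ) < (1 - q) * (1 - r)⁻¹ by positivity)
    nlinarith [h]
end

section
/- Let p > 1, 0 < q < 1, and for M ≥ 1 let x^{(M)} be the sequence with x_j = 1 for 1 ≤ j ≤ M and x_j = 0 for j > M. Then for the operator A x (i) = ∑_{j=i}^∞ q^{j-i} x_j, one has lim_{M→∞} ( ∑_i (A x^{(M)}(i))^p / ∑_j (x^{(M)}_j)^p )^{1/p} = 1/(1-q). -/
open Filter

/-- For the geometric Toeplitz operator `(A x)_i = ∑_{j ≥ i} q^{j-i} x_j` and the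
truncated test sequences `x^{(M)}` (`x_j = 1` for `1 ≤ j ≤ M`, `0` otherwise;
here `j = i+1+d`), the ratio of `ℓ^p` norms tends to `1/(1-q)` as `M → ∞`. -/
theorem toeplitz_test_ratio_limit (q p : ℝ) (hq0 : 0 < q) (hq1 : q < 1) (hp : 1 < p) :
    Tendsto
      (fun M : ℕ =>
        ((∑' i : ℕ, (∑' d : ℕ, q ^ d * (if i + 1 + d ≤ M then (1 : ℝ) else 0)) ^ p) /
            (M : ℝ)) ^ (1 / p))
      atTop (nhds ((1 - q)⁻¹)) := by
  have hq' : (0:ℝ) < 1 - q := by linarith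
  set c : ℝ := (1 - q)⁻¹ with hc_def
  have hc : 0 < c := inv_pos.mpr hq'
  have hp0 : (0:ℝ) < p := by linarith
  set u : ℕ → ℝ := fun j => (c * (1 - q ^ (j + 1))) ^ p with hu_def
  -- Step 1: identify the tsum with a finite sum
  have key : ∀ M : ℕ,
      (∑' i : ℕ, (∑' d : ℕ, q ^ d * (if i + 1 + d ≤ M then (1 : ℝ) else 0)) ^ p)
        = ∑ j ∈ Finset.range M, u j := by
    intro M
    have inner : ∀ i : ℕ,
        (∑' d : ℕ, q ^ d * (if i + 1 + d ≤ M then (1:ℝ) else 0))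
          = c * (1 - q ^ (M - i)) := by
      intro i
      have h1 : (∑' d : ℕ, q ^ d * (if i + 1 + d ≤ M then (1:ℝ) else 0))
          = ∑ d ∈ Finset.range (M - i), q ^ d := by
        rw [tsum_eq_sum (s := Finset.range (M - i))]
        · refine Finset.sum_congr rfl fun d hd => ?_
          rw [Finset.mem_range] at hd
          rw [if_pos (by omega), mul_one]
        · intro d hd
          rw [Finset.mem_range] at hd
          rw [if_neg (by omega), mul_zero]
      have hcm : c * (1 - q ^ (M - i)) = (1 - q ^ (M - i)) / (1 - q) := by
        rw [hc_def]; ring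
      rw [h1, geom_sum_eq (ne_of_lt hq1), hcm,
        div_eq_div_iff (by linarith) (by linarith)]
      ring
    calc (∑' i : ℕ, (∑' d : ℕ, q ^ d * (if i + 1 + d ≤ M then (1 : ℝ) else 0)) ^ p)
        = ∑ i ∈ Finset.range M, (c * (1 - q ^ (M - i))) ^ p := by
          rw [tsum_congr fun i => by rw [inner i]]
          rw [tsum_eq_sum (s := Finset.range M)]
          intro i hi
          rw [Finset.mem_range, not_lt] at hi
          have : M - i = 0 := by omega
          rw [this, pow_zero, sub_self, mul_zero, Real.zero_rpow (ne_of_gt hp0)]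
      _ = ∑ i ∈ Finset.range M, u (M - 1 - i) := by
          refine Finset.sum_congr rfl fun i hi => ?_
          rw [Finset.mem_range] at hi
          have : M - 1 - i + 1 = M - i := by omega
          simp only [hu_def, this]
      _ = ∑ j ∈ Finset.range M, u j := Finset.sum_range_reflect u M
  simp only [key]
  -- Step 2: Cesàro limit
  have hu : Tendsto u atTop (nhds (c ^ p)) := by
    have h0 : Tendsto (fun j : ℕ => q ^ (j + 1)) atTop (nhds 0) := by
      have := tendsto_pow_atTop_nhds_zero_of_lt_one hq0.le hq1
      exact this.comp (tendsto_add_atTop_nat 1)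
    have h1 : Tendsto (fun j : ℕ => c * (1 - q ^ (j + 1))) atTop (nhds c) := by
      have h2 : Tendsto (fun j : ℕ => (1:ℝ) - q ^ (j + 1)) atTop (nhds (1 - 0)) :=
        tendsto_const_nhds.sub h0
      have := h2.const_mul c
      simpa using this
    have := h1.rpow_const (p := p) (Or.inr hp0.le)
    exact this
  have hcesaro : Tendsto (fun M : ℕ => (∑ j ∈ Finset.range M, u j) / M)
      atTop (nhds (c ^ p)) := by
    simpa [div_eq_mul_inv, mul_comm] using hu.cesaro
  have hfinal := hcesaro.rpow_const (p := 1 / p)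
      (Or.inr (by positivity))
  have hcp : (c ^ p) ^ (1 / p) = c := by
    rw [← Real.rpow_mul hc.le, mul_one_div, div_self (ne_of_gt hp0), Real.rpow_one]
  rwa [hcp] at hfinal
end
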